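/- For a single stable mode, the derivative of the angle autocorrelation recovers the angle impulse response up to scaling: if C(τ) = −α η² [(1/(2c) + 1/γ) e^{cτ} + (1/(2d) + 1/γ) e^{dτ}], then dC/dτ(τ) = −(α/(2γ)) η (e^{cτ} − e^{dτ}) = −(α/(2γ)) h(τ), i.e., h(τ) = −(2γ/α) C'(τ). -/

import Mathlib

open Complex

private lemma expDeriv (c : ℂ) (τ : ℝ) :
    HasDerivAt (fun t : ℝ => Complex.exp (c * t)) (c * Complex.exp (c * τ)) τ := by
  have h1 : HasDerivAt (fun z : ℂ => Complex.exp (c * z)) (c * Complex.exp (c * τ)) (τ : ℂ) := by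
    simpa [mul_comm, Function.comp_def] using
      ((Complex.hasDerivAt_exp (c * τ)).comp (τ : ℂ) ((hasDerivAt_id (τ : ℂ)).const_mul c))
  exact h1.comp_ofReal

/-- Single-mode angle autocorrelation derivative recovers the angle impulse response:
C'(τ) = -(α/(2γ)) h(τ), i.e., h(τ) = -(2γ/α) C'(τ). -/
theorem stmt7 (γ α : ℝ) (hγ : 0 < γ) (hα : 0 < α)
    (c d η : ℂ) (hcre : c.re < 0) (hdre : d.re < 0)
    (hsum : c + d = -(γ : ℂ)) (hdiff : c - d = 1 / η) (lam : ℝ) (hlam : 0 < lam)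
    (hprod : c * d = (lam : ℂ))
    (C h : ℝ → ℂ)
    (hC : ∀ τ : ℝ, C τ = -(α : ℂ) * η ^ 2 *
      ((1 / (2 * c) + 1 / (γ : ℂ)) * Complex.exp (c * τ)
        + (1 / (2 * d) + 1 / (γ : ℂ)) * Complex.exp (d * τ)))
    (hh : ∀ τ : ℝ, h τ = η * (Complex.exp (c * τ) - Complex.exp (d * τ))) :
    ∀ τ : ℝ, deriv C τ = -((α : ℂ) / (2 * γ)) * h τ ∧
      h τ = -((2 * γ : ℝ) / α : ℝ) * deriv C τ := by
  have hγ0 : (γ : ℂ) ≠ 0 := by exact_mod_cast hγ.ne'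
  have hα0 : (α : ℂ) ≠ 0 := by exact_mod_cast hα.ne'
  have hcd : c * d ≠ 0 := by rw [hprod]; exact_mod_cast hlam.ne'
  have hc0 : c ≠ 0 := fun h => hcd (by simp [h])
  have hd0 : d ≠ 0 := fun h => hcd (by simp [h])
  have hCfun : C = fun τ : ℝ => -(α : ℂ) * η ^ 2 *
      ((1 / (2 * c) + 1 / (γ : ℂ)) * Complex.exp (c * τ)
        + (1 / (2 * d) + 1 / (γ : ℂ)) * Complex.exp (d * τ)) := funext hC
  intro τ
  have hD : deriv C τ = -(α : ℂ) * η ^ 2 *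
      ((1 / (2 * c) + 1 / (γ : ℂ)) * (c * Complex.exp (c * τ))
        + (1 / (2 * d) + 1 / (γ : ℂ)) * (d * Complex.exp (d * τ))) := by
    rw [hCfun]
    exact ((((expDeriv c τ).const_mul (1 / (2 * c) + 1 / (γ : ℂ))).add
      ((expDeriv d τ).const_mul (1 / (2 * d) + 1 / (γ : ℂ)))).const_mul
      (-(α : ℂ) * η ^ 2)).deriv
  have hc1 : -(α : ℂ) * η ^ 2 * ((1 / (2 * c) + 1 / (γ : ℂ)) * c) = -((α : ℂ) / (2 * γ)) * η := by
    rcases eq_or_ne η 0 with hη | hη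
    · simp [hη]
    · have hd' : η * (c - d) = 1 := by rw [hdiff]; field_simp
      field_simp
      linear_combination (-1:ℂ) * hd' - η * hsum
  have hc2 : -(α : ℂ) * η ^ 2 * ((1 / (2 * d) + 1 / (γ : ℂ)) * d) = ((α : ℂ) / (2 * γ)) * η := by
    rcases eq_or_ne η 0 with hη | hη
    · simp [hη]
    · have hd' : η * (c - d) = 1 := by rw [hdiff]; field_simp
      field_simp
      linear_combination hd' - η * hsum
  have key : deriv C τ = -((α : ℂ) / (2 * γ)) * h τ := by
    rw [hD, hh]
    linear_combination Complex.exp (c * τ) * hc1 + Complex.exp (d * τ) * hc2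
  refine ⟨key, ?_⟩
  rw [key]
  push_cast
  field_simp
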